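/- Let A₁, …, A_M be independent events in a probability space, each with probability p. Then Pr(⋃ᵢ Aᵢ) ≥ (1/2)·min{1, M·p}. -/

import Mathlib

open MeasureTheory ProbabilityTheory
open scoped ENNReal

/-- The key real-number inequality: `min 1 (Mx) / 2 + (1-x)^M ≤ 1`. -/
lemma shulman_real_key (x : ℝ) (hx0 : 0 ≤ x) (hx1 : x ≤ 1) (M : ℕ) (hM : 0 < M) :
    min 1 ((M : ℝ) * x) / 2 + (1 - x) ^ M ≤ 1 := by
  have hMx : (0:ℝ) ≤ (M : ℝ) * x := by positivity
  have hpos : (0:ℝ) < 1 + (M : ℝ) * x := by linarith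
  -- Bernoulli: 1 + M x ≤ (1+x)^M
  have hbern : 1 + (M : ℝ) * x ≤ (1 + x) ^ M := by
    have := one_add_mul_le_pow (a := x) (by linarith) M
    linarith [this]
  -- (1-x)^M (1+x)^M ≤ 1
  have h1 : (1 - x) ^ M * (1 + x) ^ M ≤ 1 := by
    rw [← mul_pow]
    have : (1 - x) * (1 + x) = 1 - x ^ 2 := by ring
    rw [this]
    apply pow_le_one₀ (by nlinarith) (by nlinarith)
  have hpowpos : (0:ℝ) ≤ (1 - x) ^ M := pow_nonneg (by linarith) M
  -- (1-x)^M ≤ 1/(1+Mx)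
  have h2 : (1 - x) ^ M * (1 + (M : ℝ) * x) ≤ 1 := by
    calc (1 - x) ^ M * (1 + (M : ℝ) * x) ≤ (1 - x) ^ M * (1 + x) ^ M :=
          mul_le_mul_of_nonneg_left hbern hpowpos
      _ ≤ 1 := h1
  have h3 : (1 - x) ^ M ≤ 1 / (1 + (M : ℝ) * x) := by
    rw [le_div_iff₀ hpos]; exact h2
  -- min 1 (Mx) / 2 ≤ Mx / (1 + Mx) = 1 - 1/(1+Mx)
  have h4 : min 1 ((M : ℝ) * x) / 2 ≤ (M : ℝ) * x / (1 + (M : ℝ) * x) := by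
    rcases le_total ((M : ℝ) * x) 1 with h | h
    · rw [min_eq_right h, div_le_div_iff₀ (by norm_num) hpos]
      nlinarith
    · rw [min_eq_left h, div_le_div_iff₀ (by norm_num) hpos]
      nlinarith
  have h5 : (M : ℝ) * x / (1 + (M : ℝ) * x) = 1 - 1 / (1 + (M : ℝ) * x) := by
    field_simp
    ring
  linarith [h4, h3, h5 ▸ h4]

/-- Shulman's lemma: for `M` independent events each of probability `p`,
`Pr(⋃ᵢ Aᵢ) ≥ (1/2) min 1 (M p)`. -/
theorem truncated_union_bound_lower
    {Ω : Type*} [MeasurableSpace Ω] (μ : Measure Ω) [IsProbabilityMeasure μ]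
    (M : ℕ) (hM : 0 < M) (A : Fin M → Set Ω) (hmeas : ∀ i, MeasurableSet (A i))
    (hindep : iIndepSet A μ) (p : ℝ≥0∞) (hp : p ≤ 1) (hA : ∀ i, μ (A i) = p) :
    (1 / 2) * min 1 ((M : ℝ≥0∞) * p) ≤ μ (⋃ i, A i) := by
  have hindep' : iIndep (fun i ↦ MeasurableSpace.generateFrom {A i}) μ :=
    (iIndepSet_iff_iIndep A μ).1 hindep
  -- measure of the intersection of complements
  have hint : μ (⋂ i, (A i)ᶜ) = (1 - p) ^ M := by
    rw [hindep'.meas_iInter (fun i ↦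
      (MeasurableSpace.measurableSet_generateFrom
        (show A i ∈ ({A i} : Set (Set Ω)) from rfl)).compl)]
    have : ∀ i, μ ((A i)ᶜ) = 1 - p := fun i ↦ by
      rw [prob_compl_eq_one_sub (hmeas i), hA i]
    simp [this]
  -- μ(⋃ A) = 1 - (1-p)^M
  have hunion : μ (⋃ i, A i) = 1 - (1 - p) ^ M := by
    have hcompl : (⋃ i, A i)ᶜ = ⋂ i, (A i)ᶜ := by simp [Set.compl_iUnion]
    have := prob_compl_eq_one_sub (μ := μ) (MeasurableSet.iUnion (fun i ↦ hmeas i))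
    rw [hcompl, hint] at this
    have hle : μ (⋃ i, A i) ≤ 1 := prob_le_one
    rw [this]
    exact (ENNReal.sub_sub_cancel ENNReal.one_ne_top hle).symm
  rw [hunion]
  -- reduce to an inequality on real numbers
  have hsub : (1 - p) ^ M ≤ 1 := pow_le_one₀ zero_le tsub_le_self
  apply ENNReal.le_sub_of_add_le_right (ne_of_lt (lt_of_le_of_lt hsub (by norm_num)))
  have hpne : p ≠ ∞ := ne_top_of_le_ne_top ENNReal.one_ne_top hp
  set x := p.toReal with hxdef
  have hx0 : 0 ≤ x := ENNReal.toReal_nonneg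
  have hx1 : x ≤ 1 := by
    rw [hxdef, ← ENNReal.toReal_one]
    exact ENNReal.toReal_mono ENNReal.one_ne_top hp
  have key := shulman_real_key x hx0 hx1 M hM
  -- convert via toReal
  have hlhs_ne : (1 / 2 : ℝ≥0∞) * min 1 ((M : ℝ≥0∞) * p) + (1 - p) ^ M ≠ ∞ := by
    apply ENNReal.add_ne_top.2
    constructor
    · exact ENNReal.mul_ne_top (by norm_num) (ne_of_lt (lt_of_le_of_lt (min_le_left _ _) (by norm_num)))
    · exact ne_of_lt (lt_of_le_of_lt hsub (by norm_num))
  rw [← ENNReal.toReal_le_toReal hlhs_ne ENNReal.one_ne_top]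
  have e1 : ((1 - p) ^ M).toReal = (1 - x) ^ M := by
    rw [ENNReal.toReal_pow, ENNReal.toReal_sub_of_le hp ENNReal.one_ne_top, ENNReal.toReal_one]
  have e2 : ((1 / 2 : ℝ≥0∞) * min 1 ((M : ℝ≥0∞) * p)).toReal
      = min 1 ((M : ℝ) * x) / 2 := by
    rw [ENNReal.toReal_mul, ENNReal.toReal_min (by norm_num)
      (ENNReal.mul_ne_top (ENNReal.natCast_ne_top M) hpne)]
    simp [ENNReal.toReal_mul]
    ring
  rw [ENNReal.toReal_add (by
      exact ENNReal.mul_ne_top (by norm_num) (ne_of_lt (lt_of_le_of_lt (min_le_left _ _) (by norm_num))))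
    (ne_of_lt (lt_of_le_of_lt hsub (by norm_num))), e1, e2, ENNReal.toReal_one]
  exact key
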